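/- Let q, k, v ∈ ℝ, a = qk, and s₀ > 0. Consider the ODE ṡ = 4avs²/(1 + 2k²s) with s(0) = s₀. If av > 0 then s(t) → +∞ as t → +∞; if av < 0 then s(t) → 0 as t → +∞. -/

import Mathlib

open Filter

/-- For `a = qk` and `s₀ > 0`, any positive global solution of `ṡ = 4avs²/(1 + 2k²s)` with
`s(0) = s₀` tends to `+∞` if `av > 0` and to `0` if `av < 0`, as `t → +∞`. -/
theorem stmt_13 (q k v a s₀ : ℝ) (ha : a = q * k) (hs₀ : 0 < s₀)
    (s : ℝ → ℝ) (h0 : s 0 = s₀) (hpos : ∀ t : ℝ, 0 ≤ t → 0 < s t)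
    (hode : ∀ t : ℝ, 0 ≤ t →
      HasDerivAt s (4 * a * v * (s t) ^ 2 / (1 + 2 * k ^ 2 * s t)) t) :
    (0 < a * v → Tendsto s atTop atTop) ∧
    (a * v < 0 → Tendsto s atTop (nhds 0)) := by
  have hk2 : (0:ℝ) ≤ k ^ 2 := sq_nonneg k
  have hden : ∀ t : ℝ, 0 ≤ t → (0:ℝ) < 1 + 2 * k ^ 2 * s t := by
    intro t ht
    have := hpos t ht
    nlinarith
  have hcont : ContinuousOn s (Set.Ici 0) := fun x hx =>
    (hode x hx).continuousAt.continuousWithinAt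
  -- linear growth lower bound
  have key : ∀ c : ℝ, (∀ t : ℝ, 0 ≤ t → c ≤ 4 * a * v * (s t) ^ 2 / (1 + 2 * k ^ 2 * s t)) →
      ∀ t : ℝ, 0 ≤ t → s 0 + c * t ≤ s t := by
    intro c hc t ht
    have hd : ∀ x : ℝ, 0 ≤ x → HasDerivAt (fun y => s y - c * y)
        (4 * a * v * (s x) ^ 2 / (1 + 2 * k ^ 2 * s x) - c * 1) x := by
      intro x hx
      exact (hode x hx).sub ((hasDerivAt_id x).const_mul c)
    have hg : MonotoneOn (fun y => s y - c * y) (Set.Ici 0) := by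
      apply monotoneOn_of_deriv_nonneg (convex_Ici 0)
        (hcont.sub (continuous_const.mul continuous_id').continuousOn)
      · intro x hx
        rw [interior_Ici] at hx
        exact ((hd x hx.le).differentiableAt).differentiableWithinAt
      · intro x hx
        rw [interior_Ici] at hx
        rw [show deriv (s - (fun x => c) * fun x => x) x = _ from (hd x hx.le).deriv]
        have := hc x hx.le
        linarith
    have := hg (Set.self_mem_Ici) (Set.mem_Ici.2 ht) ht
    simp only [mul_zero, sub_zero] at this
    linarith
  -- linear decay upper bound
  have key2 : ∀ c : ℝ, (∀ t : ℝ, 0 ≤ t → 4 * a * v * (s t) ^ 2 / (1 + 2 * k ^ 2 * s t) ≤ c) →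
      ∀ t : ℝ, 0 ≤ t → s t ≤ s 0 + c * t := by
    intro c hc t ht
    have hd : ∀ x : ℝ, 0 ≤ x → HasDerivAt (fun y => s y - c * y)
        (4 * a * v * (s x) ^ 2 / (1 + 2 * k ^ 2 * s x) - c * 1) x := by
      intro x hx
      exact (hode x hx).sub ((hasDerivAt_id x).const_mul c)
    have hg : AntitoneOn (fun y => s y - c * y) (Set.Ici 0) := by
      apply antitoneOn_of_deriv_nonpos (convex_Ici 0)
        (hcont.sub (continuous_const.mul continuous_id').continuousOn)
      · intro x hx
        rw [interior_Ici] at hx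
        exact ((hd x hx.le).differentiableAt).differentiableWithinAt
      · intro x hx
        rw [interior_Ici] at hx
        rw [show deriv (s - (fun x => c) * fun x => x) x = _ from (hd x hx.le).deriv]
        have := hc x hx.le
        linarith
    have := hg (Set.self_mem_Ici) (Set.mem_Ici.2 ht) ht
    simp only [mul_zero, sub_zero] at this
    linarith
  constructor
  · -- increasing case
    intro hav
    have hmono : MonotoneOn s (Set.Ici 0) := by
      apply monotoneOn_of_deriv_nonneg (convex_Ici 0) hcont
      · intro x hx
        rw [interior_Ici] at hx
        exact (hode x hx.le).differentiableAt.differentiableWithinAt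
      · intro x hx
        rw [interior_Ici] at hx
        rw [(hode x hx.le).deriv]
        have h1 := hpos x hx.le
        have h2 := hden x hx.le
        apply div_nonneg _ h2.le
        nlinarith [mul_pos hav (mul_pos h1 h1)]
    rw [tendsto_atTop]
    intro b
    by_cases hM : ∃ t₀ : ℝ, 0 ≤ t₀ ∧ b ≤ s t₀
    · obtain ⟨t₀, ht₀, hb⟩ := hM
      filter_upwards [eventually_ge_atTop t₀] with t ht
      exact hb.trans (hmono (Set.mem_Ici.2 ht₀) (Set.mem_Ici.2 (ht₀.trans ht)) ht)
    · push_neg at hM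
      exfalso
      have hb0 : s₀ < b := h0 ▸ hM 0 le_rfl
      have hbpos : (0:ℝ) < b := hs₀.trans hb0
      set c : ℝ := 4 * a * v * s₀ ^ 2 / (1 + 2 * k ^ 2 * b) with hc
      have hcpos : 0 < c := by
        apply div_pos (by nlinarith [mul_pos hav (mul_pos hs₀ hs₀)]) (by nlinarith)
      have hlb : ∀ t : ℝ, 0 ≤ t → s₀ ≤ s t := by
        intro t ht
        have := hmono (Set.self_mem_Ici) (Set.mem_Ici.2 ht) ht
        linarith [h0 ▸ this]
      have hcle : ∀ t : ℝ, 0 ≤ t → c ≤ 4 * a * v * (s t) ^ 2 / (1 + 2 * k ^ 2 * s t) := by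
        intro t ht
        have h1 := hlb t ht
        have h2 := (hM t ht).le
        have hD1 : (0:ℝ) < 1 + 2 * k ^ 2 * b := by nlinarith
        have hD2 := hden t ht
        have hsq : s₀ ^ 2 ≤ (s t) ^ 2 := by nlinarith
        have h3 : s₀ ^ 2 * s t ≤ (s t) ^ 2 * b := by nlinarith [hpos t ht]
        rw [hc, div_le_div_iff₀ hD1 hD2]
        nlinarith [mul_nonneg hav.le (sub_nonneg.2 hsq),
          mul_nonneg (mul_nonneg hav.le hk2) (sub_nonneg.2 h3)]
      set T : ℝ := max 0 ((b - s₀) / c) with hT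
      have hT0 : 0 ≤ T := le_max_left _ _
      have h1 := key c hcle T hT0
      have h2 : b - s₀ ≤ c * T := by
        rw [← div_le_iff₀' hcpos]
        exact le_max_right _ _
      have := hM T hT0
      rw [h0] at h1
      linarith
  · -- decreasing case
    intro hav
    have hanti : AntitoneOn s (Set.Ici 0) := by
      apply antitoneOn_of_deriv_nonpos (convex_Ici 0) hcont
      · intro x hx
        rw [interior_Ici] at hx
        exact (hode x hx.le).differentiableAt.differentiableWithinAt
      · intro x hx
        rw [interior_Ici] at hx
        rw [(hode x hx.le).deriv]
        have h1 := hpos x hx.le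
        have h2 := hden x hx.le
        apply div_nonpos_of_nonpos_of_nonneg _ h2.le
        nlinarith
    have hub : ∀ t : ℝ, 0 ≤ t → s t ≤ s₀ := by
      intro t ht
      have := hanti (Set.self_mem_Ici) (Set.mem_Ici.2 ht) ht
      linarith [h0 ▸ this]
    rw [tendsto_order]
    constructor
    · intro b hb
      filter_upwards [eventually_ge_atTop (0:ℝ)] with t ht
      exact hb.trans_le (hpos t ht).le
    · intro ε hε
      by_cases hex : ∃ t₀ : ℝ, 0 ≤ t₀ ∧ s t₀ < ε
      · obtain ⟨t₀, ht₀, hlt⟩ := hex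
        filter_upwards [eventually_ge_atTop t₀] with t ht
        exact (hanti (Set.mem_Ici.2 ht₀) (Set.mem_Ici.2 (ht₀.trans ht)) ht).trans_lt hlt
      · push_neg at hex
        exfalso
        set c : ℝ := -(4 * a * v * ε ^ 2 / (1 + 2 * k ^ 2 * s₀)) with hc
        have hDs : (0:ℝ) < 1 + 2 * k ^ 2 * s₀ := by nlinarith
        have hcpos : 0 < c := by
          rw [hc, neg_pos]
          apply div_neg_of_neg_of_pos _ hDs
          nlinarith [mul_neg_of_neg_of_pos hav (mul_pos hε hε)]
        have hcle : ∀ t : ℝ, 0 ≤ t → 4 * a * v * (s t) ^ 2 / (1 + 2 * k ^ 2 * s t) ≤ -c := by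
          intro t ht
          rw [hc, neg_neg]
          have h1 := hex t ht
          have h2 := hub t ht
          have hD2 := hden t ht
          have hsq : ε ^ 2 ≤ (s t) ^ 2 := by nlinarith
          have h3 : ε ^ 2 * s t ≤ (s t) ^ 2 * s₀ := by nlinarith [hpos t ht]
          rw [div_le_div_iff₀ hD2 hDs]
          nlinarith [mul_nonneg (neg_nonneg.2 hav.le) (sub_nonneg.2 hsq),
            mul_nonneg (mul_nonneg (neg_nonneg.2 hav.le) hk2) (sub_nonneg.2 h3)]
        set T : ℝ := max 0 (s₀ / c) with hT
        have hT0 : 0 ≤ T := le_max_left _ _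
        have h1 := key2 (-c) hcle T hT0
        have h2 : s₀ ≤ c * T := by
          rw [← div_le_iff₀' hcpos]
          exact le_max_right _ _
        have := hpos T hT0
        rw [h0] at h1
        linarith
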